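/- Let ω > 0 be a constant and assume the tangential velocity α satisfies the asymptotically uniform redistribution equation ∂_u α(t,u) = g(t,u)·( κ(t,u) β(t,u) − ⟨κβ⟩(t) + ( L(t)/g(t,u) − 1 ) ω ) for all (t,u). Then g(t,u)/L(t) − 1 = e^{−ω t} ( g(0,u)/L(0) − 1 ) for all t ≥ 0 and all u; in particular g(t,·)/L(t) → 1 uniformly in u as t → ∞. -/

import Mathlib

open Real MeasureTheory Function RealInnerProductSpace

local notation "E3" => EuclideanSpace ℝ (Fin 3)

/-- Clairaut-type lemma: for a `C²` function `F` on `ℝ × ℝ`, the `t`-derivative of the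
partial-`u` derivative equals the `u`-derivative of the partial-`t` derivative. -/
lemma clairaut_line {E : Type*} [NormedAddCommGroup E] [NormedSpace ℝ E] {F : ℝ × ℝ → E}
    (hF : ContDiff ℝ 2 F) (t u : ℝ) {Vu : E}
    (hVu : HasDerivAt (fun w => fderiv ℝ F (t, w) (1, 0)) Vu u) :
    HasDerivAt (fun s => fderiv ℝ F (s, u) (0, 1)) Vu t := by
  set K := fderiv ℝ F with hKdef
  have hK : ContDiff ℝ 1 K := hF.fderiv_right (le_refl 2)
  have hKd : ∀ p : ℝ × ℝ, HasFDerivAt K (fderiv ℝ K p) p :=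
    fun p => (hK.differentiable one_ne_zero p).hasFDerivAt
  have line1 : HasDerivAt (fun s => ((s, u) : ℝ × ℝ)) ((1 : ℝ), (0 : ℝ)) t :=
    (hasDerivAt_id t).prodMk (hasDerivAt_const t u)
  have h1 : HasDerivAt (fun s => K (s, u)) (fderiv ℝ K (t, u) (1, 0)) t :=
    (hKd (t, u)).comp_hasDerivAt t line1
  have h1' : HasDerivAt (fun s => K (s, u) ((0 : ℝ), (1 : ℝ)))
      ((fderiv ℝ K (t, u) (1, 0)) (0, 1)) t := by
    have := h1.clm_apply (hasDerivAt_const t ((0 : ℝ), (1 : ℝ)))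
    simpa using this
  have line2 : HasDerivAt (fun w => ((t, w) : ℝ × ℝ)) ((0 : ℝ), (1 : ℝ)) u :=
    (hasDerivAt_const u t).prodMk (hasDerivAt_id u)
  have h2 : HasDerivAt (fun w => K (t, w)) (fderiv ℝ K (t, u) (0, 1)) u :=
    (hKd (t, u)).comp_hasDerivAt u line2
  have h2' : HasDerivAt (fun w => K (t, w) ((1 : ℝ), (0 : ℝ)))
      ((fderiv ℝ K (t, u) (0, 1)) (1, 0)) u := by
    have := h2.clm_apply (hasDerivAt_const u ((1 : ℝ), (0 : ℝ)))
    simpa using this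
  have huniq : Vu = (fderiv ℝ K (t, u) (0, 1)) (1, 0) := hVu.unique h2'
  have hsymm : (fderiv ℝ K (t, u) (0, 1)) (1, 0) = (fderiv ℝ K (t, u) (1, 0)) (0, 1) :=
    second_derivative_symmetric (fun y => (hF.differentiable two_ne_zero y).hasFDerivAt)
      (hKd (t, u)) _ _
  rw [huniq, hsymm]
  exact h1'

/-- Context: an evolving family of closed space curves `Γ_t` parameterized by `X t u`,
with local length `g = ‖∂_u X‖ > 0`, unit tangent `T = g⁻¹ • ∂_u X`, Frenet-type frame
`(T, N, B)`, curvature `κ` (with `∂_u T = g κ N`), evolving by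
`∂_t X = β N + γ B + α T`, and total length `L t = ∫₀¹ g t u du`. -/
theorem asymptotically_uniform_redistribution
    (X Xu : ℝ → ℝ → E3)
    (g κ α αu β γ : ℝ → ℝ → ℝ)
    (T N B : ℝ → ℝ → E3)
    (L : ℝ → ℝ)
    (hX2 : ContDiff ℝ 2 (uncurry X))
    (hXper : ∀ t u, X t (u + 1) = X t u)
    (hXu : ∀ t u, HasDerivAt (fun w => X t w) (Xu t u) u)
    (hg : ∀ t u, g t u = ‖Xu t u‖)
    (hgpos : ∀ t u, 0 < g t u)
    (hT : ∀ t u, T t u = (g t u)⁻¹ • Xu t u)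
    (hN1 : ContDiff ℝ 1 (uncurry N))
    (hB1 : ContDiff ℝ 1 (uncurry B))
    (hNper : ∀ t u, N t (u + 1) = N t u)
    (hBper : ∀ t u, B t (u + 1) = B t u)
    (hNnorm : ∀ t u, ‖N t u‖ = 1)
    (hBnorm : ∀ t u, ‖B t u‖ = 1)
    (hTN : ∀ t u, ⟪T t u, N t u⟫ = 0)
    (hTB : ∀ t u, ⟪T t u, B t u⟫ = 0)
    (hNB : ∀ t u, ⟪N t u, B t u⟫ = 0)
    (hκc : Continuous (uncurry κ))
    (hFrenet : ∀ t u, HasDerivAt (fun w => T t w) ((g t u * κ t u) • N t u) u)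
    (hα1 : ContDiff ℝ 1 (uncurry α))
    (hβ1 : ContDiff ℝ 1 (uncurry β))
    (hγ1 : ContDiff ℝ 1 (uncurry γ))
    (hαper : ∀ t u, α t (u + 1) = α t u)
    (hβper : ∀ t u, β t (u + 1) = β t u)
    (hγper : ∀ t u, γ t (u + 1) = γ t u)
    (hαu : ∀ t u, HasDerivAt (fun w => α t w) (αu t u) u)
    (hevol : ∀ t u, HasDerivAt (fun s => X s u)
      (β t u • N t u + γ t u • B t u + α t u • T t u) t)
    (hL : ∀ t, L t = ∫ u in (0:ℝ)..1, g t u)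

    (ω : ℝ) (hω : 0 < ω)
    (hαeq : ∀ t u, αu t u = g t u * (κ t u * β t u
      - (L t)⁻¹ * (∫ w in (0:ℝ)..1, κ t w * β t w * g t w)
      + (L t / g t u - 1) * ω)) :
    (∀ t : ℝ, 0 ≤ t → ∀ u : ℝ,
      g t u / L t - 1 = Real.exp (-(ω * t)) * (g 0 u / L 0 - 1))
    ∧ TendstoUniformly (fun t u => g t u / L t) (fun _ => (1:ℝ)) Filter.atTop := by
  have hgt : ∀ t u, HasDerivAt (fun s => g s u) (αu t u - g t u * κ t u * β t u) t := by
    intro t u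
    set K := fderiv ℝ (uncurry X) with hKdef
    -- partial derivatives as fderiv applications
    have hA : ∀ t u, Xu t u = K (t, u) (0, 1) := by
      intro t u
      have line2 : HasDerivAt (fun w => ((t, w) : ℝ × ℝ)) ((0 : ℝ), (1 : ℝ)) u :=
        (hasDerivAt_const u t).prodMk (hasDerivAt_id u)
      have h : HasDerivAt (fun w => uncurry X (t, w)) (K (t, u) (0, 1)) u :=
        ((hX2.differentiable two_ne_zero (t, u)).hasFDerivAt).comp_hasDerivAt u line2
      exact (hXu t u).unique h
    have hB : ∀ t u, (β t u • N t u + γ t u • B t u + α t u • T t u) = K (t, u) (1, 0) := by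
      intro t u
      have line1 : HasDerivAt (fun s => ((s, u) : ℝ × ℝ)) ((1 : ℝ), (0 : ℝ)) t :=
        (hasDerivAt_id t).prodMk (hasDerivAt_const t u)
      have h : HasDerivAt (fun s => uncurry X (s, u)) (K (t, u) (1, 0)) t :=
        by have := ((hX2.differentiable two_ne_zero (t, u)).hasFDerivAt).comp_hasDerivAt t line1; exact this
      exact (hevol t u).unique h
    -- u-derivatives of the frame and coefficients
    have hNd : HasDerivAt (fun w => N t w) (deriv (fun w => N t w) u) u := by
      have : DifferentiableAt ℝ (fun w => N t w) u :=
        (hN1.differentiable one_ne_zero (t, u)).comp u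
          ((differentiableAt_const t).prodMk differentiableAt_id)
      exact this.hasDerivAt
    have hBd : HasDerivAt (fun w => B t w) (deriv (fun w => B t w) u) u := by
      have : DifferentiableAt ℝ (fun w => B t w) u :=
        (hB1.differentiable one_ne_zero (t, u)).comp u
          ((differentiableAt_const t).prodMk differentiableAt_id)
      exact this.hasDerivAt
    have hβd : HasDerivAt (fun w => β t w) (deriv (fun w => β t w) u) u := by
      have : DifferentiableAt ℝ (fun w => β t w) u :=
        (hβ1.differentiable one_ne_zero (t, u)).comp u
          ((differentiableAt_const t).prodMk differentiableAt_id)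
      exact this.hasDerivAt
    have hγd : HasDerivAt (fun w => γ t w) (deriv (fun w => γ t w) u) u := by
      have : DifferentiableAt ℝ (fun w => γ t w) u :=
        (hγ1.differentiable one_ne_zero (t, u)).comp u
          ((differentiableAt_const t).prodMk differentiableAt_id)
      exact this.hasDerivAt
    set Nu := deriv (fun w => N t w) u
    set Bu := deriv (fun w => B t w) u
    -- u-derivative of the velocity field
    set D : E3 := (β t u • Nu + deriv (fun w => β t w) u • N t u)
        + (γ t u • Bu + deriv (fun w => γ t w) u • B t u)
        + (α t u • ((g t u * κ t u) • N t u) + αu t u • T t u) with hD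
    have hVder : HasDerivAt (fun w => β t w • N t w + γ t w • B t w + α t w • T t w) D u := by
      exact ((hβd.smul hNd).add (hγd.smul hBd)).add ((hαu t u).smul (hFrenet t u))
    -- t-derivative of Xu via Clairaut
    have hXut : HasDerivAt (fun s => Xu s u) D t := by
      have hVu : HasDerivAt (fun w => K (t, w) ((1:ℝ), (0:ℝ))) D u := by
        have : (fun w => K (t, w) ((1:ℝ), (0:ℝ)))
            = fun w => β t w • N t w + γ t w • B t w + α t w • T t w := by
          funext w; rw [← hB t w]
        rw [this]; exact hVder
      have := clairaut_line hX2 t u hVu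
      have heq : (fun s => Xu s u) = fun s => K (s, u) ((0:ℝ), (1:ℝ)) := by
        funext s; exact hA s u
      rw [heq]; exact this
    -- inner product computations
    have hTT : ⟪T t u, T t u⟫ = (1 : ℝ) := by
      have hTnorm : ‖T t u‖ = 1 := by
        rw [hT, norm_smul, hg, norm_inv, Real.norm_eq_abs, abs_of_pos (hg t u ▸ hgpos t u)]
        rw [← hg]
        exact inv_mul_cancel₀ (hgpos t u).ne'
      rw [real_inner_self_eq_norm_mul_norm, hTnorm, one_mul]
    have hNN : ⟪N t u, N t u⟫ = (1 : ℝ) := by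
      rw [real_inner_self_eq_norm_mul_norm, hNnorm, one_mul]
    have hNuT : ⟪Nu, T t u⟫ = -(g t u * κ t u) := by
      have hcon : HasDerivAt (fun w => (⟪N t w, T t w⟫ : ℝ))
          (⟪N t u, (g t u * κ t u) • N t u⟫ + ⟪Nu, T t u⟫) u :=
        hNd.inner ℝ (hFrenet t u)
      have hzero : (fun w => ⟪N t w, T t w⟫) = fun _ => (0 : ℝ) := by
        funext w; rw [real_inner_comm]; exact hTN t w
      have : ⟪N t u, (g t u * κ t u) • N t u⟫ + ⟪Nu, T t u⟫ = 0 := by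
        have h0 : HasDerivAt (fun _ : ℝ => (0 : ℝ)) 0 u := hasDerivAt_const u 0
        exact (hzero ▸ hcon).unique h0
      rw [real_inner_smul_right, hNN, mul_one] at this
      linarith
    have hBuT : ⟪Bu, T t u⟫ = 0 := by
      have hcon : HasDerivAt (fun w => (⟪B t w, T t w⟫ : ℝ))
          (⟪B t u, (g t u * κ t u) • N t u⟫ + ⟪Bu, T t u⟫) u :=
        hBd.inner ℝ (hFrenet t u)
      have hzero : (fun w => ⟪B t w, T t w⟫) = fun _ => (0 : ℝ) := by
        funext w; rw [real_inner_comm]; exact hTB t w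
      have : ⟪B t u, (g t u * κ t u) • N t u⟫ + ⟪Bu, T t u⟫ = 0 := by
        have h0 : HasDerivAt (fun _ : ℝ => (0 : ℝ)) 0 u := hasDerivAt_const u 0
        exact (hzero ▸ hcon).unique h0
      have hBN : ⟪B t u, N t u⟫ = 0 := by rw [real_inner_comm]; exact hNB t u
      rw [real_inner_smul_right, hBN, mul_zero, zero_add] at this
      exact this
    have hDT : ⟪D, T t u⟫ = αu t u - g t u * κ t u * β t u := by
      have hNT : ⟪N t u, T t u⟫ = 0 := by rw [real_inner_comm]; exact hTN t u
      have hBT : ⟪B t u, T t u⟫ = 0 := by rw [real_inner_comm]; exact hTB t u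
      rw [hD]
      simp only [inner_add_left, real_inner_smul_left, hNT, hBT, hTT, hNuT, hBuT]
      ring
    -- derivative of g = ‖Xu‖ via sqrt of inner product
    have hq : HasDerivAt (fun s => ⟪Xu s u, Xu s u⟫)
        (⟪Xu t u, D⟫ + ⟪D, Xu t u⟫) t := hXut.inner ℝ hXut
    have hqpos : (0:ℝ) < ⟪Xu t u, Xu t u⟫ := by
      rw [real_inner_self_eq_norm_mul_norm, ← hg]
      exact mul_pos (hgpos t u) (hgpos t u)
    have hgsqrt : ∀ s, g s u = Real.sqrt ⟪Xu s u, Xu s u⟫ := by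
      intro s
      rw [real_inner_self_eq_norm_mul_norm, Real.sqrt_mul_self (norm_nonneg _), hg]
    have hgd : HasDerivAt (fun s => g s u)
        (1 / (2 * Real.sqrt ⟪Xu t u, Xu t u⟫) * (⟪Xu t u, D⟫ + ⟪D, Xu t u⟫)) t := by
      have := (Real.hasDerivAt_sqrt hqpos.ne').comp t hq
      have heq : (fun s => g s u) = (Real.sqrt ∘ fun s => ⟪Xu s u, Xu s u⟫) := by
        funext s; exact hgsqrt s
      rw [heq]
      convert this using 1
    convert hgd using 1
    have hXuT : Xu t u = g t u • T t u := by
      rw [hT, smul_smul, mul_inv_cancel₀ (hgpos t u).ne', one_smul]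
    have hsq : Real.sqrt ⟪Xu t u, Xu t u⟫ = g t u := (hgsqrt t).symm
    have hDT' : (⟪T t u, D⟫ : ℝ) = αu t u - g t u * κ t u * β t u := by
      rw [real_inner_comm]; exact hDT
    rw [hsq, hXuT]
    simp only [real_inner_smul_left, real_inner_smul_right, hDT, hDT']
    field_simp [(hgpos t u).ne']
    ring
  -- joint continuity of g
  have hA : ∀ t u, Xu t u = fderiv ℝ (uncurry X) (t, u) (0, 1) := by
    intro t u
    have line2 : HasDerivAt (fun w => ((t, w) : ℝ × ℝ)) ((0 : ℝ), (1 : ℝ)) u :=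
      (hasDerivAt_const u t).prodMk (hasDerivAt_id u)
    have h : HasDerivAt (fun w => uncurry X (t, w)) (fderiv ℝ (uncurry X) (t, u) (0, 1)) u :=
      ((hX2.differentiable two_ne_zero (t, u)).hasFDerivAt).comp_hasDerivAt u line2
    exact (hXu t u).unique h
  have hgc : Continuous (fun p : ℝ × ℝ => g p.1 p.2) := by
    have h1 : Continuous (fun p : ℝ × ℝ => Xu p.1 p.2) := by
      have : (fun p : ℝ × ℝ => Xu p.1 p.2) = fun p => fderiv ℝ (uncurry X) p (0, 1) := by
        funext p; exact hA p.1 p.2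
      rw [this]
      exact (hX2.fderiv_right (m := 1) (by norm_num)).continuous.clm_apply continuous_const
    have : (fun p : ℝ × ℝ => g p.1 p.2) = fun p => ‖Xu p.1 p.2‖ := by
      funext p; exact hg p.1 p.2
    rw [this]; exact h1.norm
  have hβc : Continuous (fun p : ℝ × ℝ => β p.1 p.2) := hβ1.continuous
  have hκc' : Continuous (fun p : ℝ × ℝ => κ p.1 p.2) := hκc
  -- continuity of L and of the κβg integral
  have hLc : Continuous L := by
    have : Continuous fun t => ∫ u in (0:ℝ)..1, g t u :=
      intervalIntegral.continuous_parametric_intervalIntegral_of_continuous' (f := fun t u => g t u)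
        (by exact hgc) 0 1
    have heq : L = fun t => ∫ u in (0:ℝ)..1, g t u := funext hL
    rw [heq]; exact this
  have hIc : Continuous fun t => ∫ w in (0:ℝ)..1, κ t w * β t w * g t w := by
    apply intervalIntegral.continuous_parametric_intervalIntegral_of_continuous'
      (f := fun t w => κ t w * β t w * g t w)
    exact (hκc'.mul hβc).mul hgc
  have hLpos : ∀ t, 0 < L t := by
    intro t
    rw [hL]
    apply intervalIntegral.intervalIntegral_pos_of_pos
    · exact ((hgc.comp (Continuous.prodMk_right t)).intervalIntegrable 0 1)
    · exact fun u => hgpos t u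
    · exact zero_lt_one
  have hgcu : ∀ t, Continuous fun u => g t u :=
    fun t => by exact hgc.comp (Continuous.prodMk_right t)
  -- rewritten derivative of g in t
  have hgt' : ∀ t u, HasDerivAt (fun s => g s u)
      (-((L t)⁻¹ * (∫ w in (0:ℝ)..1, κ t w * β t w * g t w)) * g t u + (L t - g t u) * ω) t := by
    intro t u
    have heq : αu t u - g t u * κ t u * β t u
        = -((L t)⁻¹ * (∫ w in (0:ℝ)..1, κ t w * β t w * g t w)) * g t u + (L t - g t u) * ω := by
      rw [hαeq]
      field_simp [(hgpos t u).ne', (hLpos t).ne']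
      ring
    exact heq ▸ hgt t u
  have hLinv : Continuous fun t => (L t)⁻¹ := hLc.inv₀ (fun t => (hLpos t).ne')
  have hFc : Continuous (fun p : ℝ × ℝ =>
      -((L p.1)⁻¹ * (∫ w in (0:ℝ)..1, κ p.1 w * β p.1 w * g p.1 w)) * g p.1 p.2
        + (L p.1 - g p.1 p.2) * ω) := by
    exact ((((hLinv.mul hIc).neg).comp continuous_fst).mul hgc).add
      (((hLc.comp continuous_fst).sub hgc).mul continuous_const)
  have hLder : ∀ t₀, HasDerivAt L (-(∫ w in (0:ℝ)..1, κ t₀ w * β t₀ w * g t₀ w)) t₀ := by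
    intro t₀
    set c : ℝ → ℝ := fun t => (L t)⁻¹ * (∫ w in (0:ℝ)..1, κ t w * β t w * g t w) with hc
    set F' : ℝ → ℝ → ℝ := fun t u => -(c t) * g t u + (L t - g t u) * ω with hF'
    obtain ⟨M, hM⟩ := ((isCompact_closedBall t₀ 1).prod (isCompact_uIcc (a := (0:ℝ)) (b := 1))).exists_bound_of_continuousOn hFc.continuousOn
    have key := intervalIntegral.hasDerivAt_integral_of_dominated_loc_of_deriv_le
      (F := fun t u => g t u) (F' := F') (bound := fun _ => M) (μ := volume)
      (a := 0) (b := 1) (x₀ := t₀) (Metric.ball_mem_nhds t₀ zero_lt_one)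
      (Filter.Eventually.of_forall fun t => (hgcu t).aestronglyMeasurable)
      ((hgcu t₀).intervalIntegrable 0 1)
      (((hFc.comp (Continuous.prodMk_right t₀))).aestronglyMeasurable)
      (Filter.Eventually.of_forall fun u hu => fun t ht =>
        hM (t, u) ⟨Metric.ball_subset_closedBall ht, Set.uIoc_subset_uIcc hu⟩)
      intervalIntegrable_const
      (Filter.Eventually.of_forall fun u _ => fun t _ => hgt' t u)
    have hval : (∫ u in (0:ℝ)..1, F' t₀ u) = -(∫ w in (0:ℝ)..1, κ t₀ w * β t₀ w * g t₀ w) := by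
      have h1 : ∀ u, F' t₀ u = (-(c t₀) - ω) * g t₀ u + L t₀ * ω := by
        intro u; simp only [hF']; ring
      rw [intervalIntegral.integral_congr (g := fun u => (-(c t₀) - ω) * g t₀ u + L t₀ * ω)
        (fun u _ => h1 u)]
      rw [intervalIntegral.integral_add
        (((hgcu t₀).intervalIntegrable 0 1).const_mul _)
        intervalIntegrable_const]
      rw [intervalIntegral.integral_const_mul, intervalIntegral.integral_const, ← hL]
      simp only [hc]
      field_simp [(hLpos t₀).ne']
      simp
    have hLfun : L = fun t => ∫ u in (0:ℝ)..1, g t u := funext hL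
    rw [hLfun]
    rw [← hval]
    exact key.2
  -- periodicity of g in u
  have hXuper : ∀ t u, Xu t (u + 1) = Xu t u := by
    intro t u
    have h1 : HasDerivAt (fun w => X t (w + 1)) ((1:ℝ) • Xu t (u + 1)) u := by
      exact (hXu t (u + 1)).scomp u ((hasDerivAt_id u).add_const 1)
    have h2 : (fun w => X t (w + 1)) = fun w => X t w := funext fun w => hXper t w
    rw [h2] at h1
    have := h1.unique (hXu t u)
    simp at this
    exact this
  have gper : ∀ t u, g t (u + 1) = g t u := by
    intro t u; rw [hg, hg, hXuper]
  have key : ∀ t u, g t u / L t - 1 = Real.exp (-(ω * t)) * (g 0 u / L 0 - 1) := by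
    intro t u
    have hdiv : ∀ s, HasDerivAt (fun s => g s u / L s) (ω * (1 - g s u / L s)) s := by
      intro s
      have h := (hgt' s u).div (hLder s) (hLpos s).ne'
      refine h.congr_deriv ?_
      field_simp [(hLpos s).ne']
      ring
    have hφ : ∀ s, HasDerivAt (fun s => (g s u / L s - 1) * Real.exp (ω * s)) 0 s := by
      intro s
      have hexp : HasDerivAt (fun s => Real.exp (ω * s)) (Real.exp (ω * s) * (ω * 1)) s :=
        ((hasDerivAt_id s).const_mul ω).exp
      have := ((hdiv s).sub_const 1).mul hexp
      refine this.congr_deriv ?_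
      ring
    have hconst : (g t u / L t - 1) * Real.exp (ω * t)
        = (g 0 u / L 0 - 1) * Real.exp (ω * 0) :=
      is_const_of_deriv_eq_zero (fun x => (hφ x).differentiableAt) (fun x => (hφ x).deriv) t 0
    rw [mul_zero, Real.exp_zero, mul_one] at hconst
    rw [Real.exp_neg, ← hconst]
    field_simp
  refine ⟨fun t _ u => key t u, ?_⟩
  -- uniform bound on the initial data
  have hcont0 : Continuous fun u => |g 0 u / L 0 - 1| :=
    (((hgc.comp (Continuous.prodMk_right 0)).div_const (L 0)).sub continuous_const).abs
  obtain ⟨M, hM⟩ := (isCompact_Icc (a := (0:ℝ)) (b := 1)).exists_bound_of_continuousOn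
    hcont0.continuousOn
  have hbound : ∀ u : ℝ, |g 0 u / L 0 - 1| ≤ M := by
    intro u
    have hper : Function.Periodic (fun u => g 0 u) 1 := fun x => gper 0 x
    have h1 : g 0 (Int.fract u) = g 0 u := by
      have := hper.sub_int_mul_eq (x := u) ⌊u⌋
      rw [mul_one, Int.self_sub_floor] at this
      exact this
    have h2 : Int.fract u ∈ Set.Icc (0:ℝ) 1 :=
      ⟨Int.fract_nonneg u, (Int.fract_lt_one u).le⟩
    have := hM (Int.fract u) h2
    rw [Real.norm_eq_abs, abs_abs] at this
    rwa [h1] at this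
  rw [Metric.tendstoUniformly_iff]
  intro ε hε
  have htend : Filter.Tendsto (fun t => Real.exp (-(ω * t)) * (M + 1)) Filter.atTop (nhds 0) := by
    have h1 : Filter.Tendsto (fun t : ℝ => -(ω * t)) Filter.atTop Filter.atBot := by
      apply Filter.tendsto_neg_atBot_iff.mpr
      exact Filter.Tendsto.const_mul_atTop hω Filter.tendsto_id
    have h2 := Real.tendsto_exp_atBot.comp h1
    simpa using h2.mul_const (M + 1)
  filter_upwards [htend.eventually_lt_const hε] with t ht u
  have hMnn : 0 ≤ M := le_trans (abs_nonneg _) (hbound 0)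
  have : dist ((fun _ => (1:ℝ)) u) (g t u / L t) = |g t u / L t - 1| := by
    rw [Real.dist_eq, abs_sub_comm]
  rw [this, key t u, abs_mul, Real.abs_exp]
  calc Real.exp (-(ω * t)) * |g 0 u / L 0 - 1|
      ≤ Real.exp (-(ω * t)) * (M + 1) := by
        apply mul_le_mul_of_nonneg_left _ (Real.exp_pos _).le
        linarith [hbound u]
    _ < ε := ht
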